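/- Let p < q be prime numbers. Then (0,0) ∈ C_{p,q}; the gradient of F_{p,q} vanishes at (0,0) and at no other point of C_{p,q}; consequently C_{p,q} is nonsingular of dimension 1 at every point of C_{p,q} ∖ {(0,0)}, while C_{p,q} is not nonsingular of dimension 1 at (0,0), i.e., the origin is the unique singular point of the real algebraic curve C_{p,q}. (Lemma 2.2(ii) in Section 2, 'lem-2-2'.) -/

import Mathlib

noncomputable section

open Filter
open scoped ENNReal

/-- `ℝ^n` with the Euclidean norm. -/
abbrev En (n : ℕ) : Type := EuclideanSpace ℝ (Fin n)

/-- Evaluation of a real polynomial in `n` variables at a point of `ℝ^n`. -/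
def pEval {n : ℕ} (P : MvPolynomial (Fin n) ℝ) (x : En n) : ℝ :=
  MvPolynomial.eval (fun i => x i) P

/-- `f` is regular on `A ⊆ ℝ^n`: at every point `a ∈ A` there are polynomials `φ, ψ`
with `ψ a ≠ 0` and `f = φ/ψ` on `A` off the zero set of `ψ`. -/
def IsRegularOn {n : ℕ} (A : Set (En n)) (f : En n → ℝ) : Prop :=
  ∀ a ∈ A, ∃ φ ψ : MvPolynomial (Fin n) ℝ, pEval ψ a ≠ 0 ∧
    ∀ x ∈ A, pEval ψ x ≠ 0 → f x = pEval φ x / pEval ψ x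

/-- An algebraic set in `ℝ^n`: the common zero set of a family of polynomials. -/
def IsAlgebraicSet {n : ℕ} (X : Set (En n)) : Prop :=
  ∃ S : Set (MvPolynomial (Fin n) ℝ), X = {x | ∀ P ∈ S, pEval P x = 0}

/-- A function on a subset `A` is real analytic if near every point of `A` it agrees
with a genuinely real analytic function defined on an open neighborhood. -/
def AnalyticOnSubset {EE : Type*} [NormedAddCommGroup EE] [NormedSpace ℝ EE]
    (A : Set EE) (f : EE → ℝ) : Prop :=
  ∀ a ∈ A, ∃ U : Set EE, IsOpen U ∧ a ∈ U ∧
    ∃ G : EE → ℝ, AnalyticOnNhd ℝ G U ∧ ∀ x ∈ A ∩ U, G x = f x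

/-- The ideal of polynomials vanishing on `X`. -/
def polyVanishingIdeal {n : ℕ} (X : Set (En n)) : Ideal (MvPolynomial (Fin n) ℝ) where
  carrier := {P | ∀ x ∈ X, pEval P x = 0}
  add_mem' := by
    intro a b ha hb x hx
    have h1 : pEval a x = 0 := ha x hx
    have h2 : pEval b x = 0 := hb x hx
    simp only [pEval, map_add] at h1 h2 ⊢
    rw [h1, h2, add_zero]
  zero_mem' := by
    intro x hx
    simp [pEval]
  smul_mem' := by
    intro c P hP x hx
    have h1 : pEval P x = 0 := hP x hx
    simp only [pEval, smul_eq_mul, map_mul] at h1 ⊢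
    rw [h1, mul_zero]

/-- A local presentation of `X` as a nonsingular set of dimension `d` at `a`:
polynomials `P i` vanishing on `X`, cutting out `X` near `a`, with linearly
independent gradients at `a`. -/
def IsLocalPresentation {n : ℕ} (X : Set (En n)) (d : ℕ) (a : En n)
    (Ω : Set (En n)) (P : Fin (n - d) → MvPolynomial (Fin n) ℝ) : Prop :=
  IsOpen Ω ∧ a ∈ Ω ∧ (∀ i, ∀ x ∈ X, pEval (P i) x = 0) ∧
  X ∩ Ω = {x | x ∈ Ω ∧ ∀ i, pEval (P i) x = 0} ∧
  LinearIndependent ℝ (fun i => (fun j => pEval (MvPolynomial.pderiv j (P i)) a : Fin n → ℝ))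

/-- `X` is nonsingular of dimension `d` at the point `a`. -/
def NonsingularAt {n : ℕ} (X : Set (En n)) (d : ℕ) (a : En n) : Prop :=
  ∃ Ω P, IsLocalPresentation X d a Ω P

/-- `X` is nonsingular of dimension `d`. -/
def IsNonsingularOfDim {n : ℕ} (X : Set (En n)) (d : ℕ) : Prop :=
  ∀ a ∈ X, NonsingularAt X d a

/-- `Z` is faithful at `b`: every real analytic function vanishing on `Z` near `b` is,
near `b`, a finite combination `Σ ψᵢ · Pᵢ` with `Pᵢ` polynomials vanishing on `Z`
and `ψᵢ` real analytic. -/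
def FaithfulAt {n : ℕ} (Z : Set (En n)) (b : En n) : Prop :=
  ∀ U : Set (En n), IsOpen U → b ∈ U →
    ∀ g : En n → ℝ, AnalyticOnNhd ℝ g U → (∀ x ∈ Z ∩ U, g x = 0) →
      ∃ V : Set (En n), IsOpen V ∧ b ∈ V ∧ V ⊆ U ∧
        ∃ (s : ℕ) (ψ : Fin s → En n → ℝ) (P : Fin s → MvPolynomial (Fin n) ℝ),
          (∀ i, AnalyticOnNhd ℝ (ψ i) V) ∧ (∀ i, ∀ x ∈ Z, pEval (P i) x = 0) ∧
          ∀ x ∈ V, g x = ∑ i, ψ i x * pEval (P i) x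

/-- `Z` is faithful if it is faithful at each of its points. -/
def IsFaithful {n : ℕ} (Z : Set (En n)) : Prop := ∀ b ∈ Z, FaithfulAt Z b

/-- The model curve `D_{p,q} = {x^p - y^q = 0, z₁ = ⋯ = z_{m-2} = 0} ⊆ ℝ^m`. -/
def Dpq (m p q : ℕ) : Set (En m) :=
  {y | (∀ h1 : 1 < m, (y ⟨0, Nat.lt_of_succ_lt h1⟩) ^ p - (y ⟨1, h1⟩) ^ q = 0) ∧
       ∀ i : Fin m, 2 ≤ (i : ℕ) → y i = 0}

/-- `C` is a `(p,q)`-curve in `X` (with `dim X = m`) with singular point `a`. -/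
def IsPqCurve {n : ℕ} (X : Set (En n)) (m p q : ℕ) (C : Set (En n)) (a : En n) : Prop :=
  IsAlgebraicSet C ∧ C ⊆ X ∧ a ∈ C ∧ ¬ NonsingularAt C 1 a ∧
  (∀ b ∈ C, b ≠ a → NonsingularAt C 1 b) ∧ FaithfulAt C a ∧
  ∃ (O : Set (En n)) (W : Set (En m)) (σ : En n → En m) (τ : En m → En n),
    IsOpen O ∧ a ∈ O ∧ IsOpen W ∧ (0 : En m) ∈ W ∧
    AnalyticOnNhd ℝ σ O ∧ AnalyticOnNhd ℝ τ W ∧ σ a = 0 ∧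
    Set.BijOn σ (X ∩ O) W ∧ (∀ x ∈ X ∩ O, τ (σ x) = x) ∧
    σ '' (C ∩ O) = Dpq m p q ∩ W

/-- A Euclidean `d`-sphere in `ℝ^n`. -/
def IsEuclideanSphere {n : ℕ} (d : ℕ) (S : Set (En n)) : Prop :=
  ∃ (Q : AffineSubspace ℝ (En n)) (x₀ : En n) (r : ℝ),
    Module.finrank ℝ Q.direction = d + 1 ∧ x₀ ∈ Q ∧ 0 < r ∧
    S = {x | ‖x - x₀‖ = r} ∩ (Q : Set (En n))

/-- `F_{p,q}(x,y) = x^p - y^q + x^{2q} + y^{2q}`. -/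
def Fpq (p q : ℕ) (w : ℝ × ℝ) : ℝ := w.1 ^ p - w.2 ^ q + w.1 ^ (2 * q) + w.2 ^ (2 * q)

/-- `C_{p,q}`, the zero set of `F_{p,q}` in `ℝ²`. -/
def Cpq (p q : ℕ) : Set (ℝ × ℝ) := {w | Fpq p q w = 0}

/-- `H_{p,q}(x,y) = x^p - y^q`. -/
def Hpq (p q : ℕ) (w : ℝ × ℝ) : ℝ := w.1 ^ p - w.2 ^ q

/-- `E_{p,q}`, the zero set of `H_{p,q}` in `ℝ²`. -/
def Epq (p q : ℕ) : Set (ℝ × ℝ) := {w | Hpq p q w = 0}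

/-- The collection `𝒢^k(ℝ^n)`: curves affinely equivalent (inside an affine 2-plane)
to a translate of `C_{p,q}` with `p < q` primes, `pk < q`. -/
def InGk {n : ℕ} (k : ℕ) (C : Set (En n)) : Prop :=
  ∃ (Q : AffineSubspace ℝ (En n)) (φ : En n →ᵃ[ℝ] ℝ × ℝ) (p q : ℕ) (ab : ℝ × ℝ),
    Module.finrank ℝ Q.direction = 2 ∧ C ⊆ (Q : Set (En n)) ∧
    Set.BijOn φ (Q : Set (En n)) Set.univ ∧
    p.Prime ∧ q.Prime ∧ p < q ∧ p * k < q ∧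
    φ '' C = (fun z => ab + z) '' Cpq p q

/-- The collection `𝓗^k(ℝ^n)`: curves affinely equivalent (inside an affine 2-plane)
to a translate of `E_{p,q}` with `p < q` primes, `pk < q`. -/
def InHk {n : ℕ} (k : ℕ) (C : Set (En n)) : Prop :=
  ∃ (Q : AffineSubspace ℝ (En n)) (φ : En n →ᵃ[ℝ] ℝ × ℝ) (p q : ℕ) (ab : ℝ × ℝ),
    Module.finrank ℝ Q.direction = 2 ∧ C ⊆ (Q : Set (En n)) ∧
    Set.BijOn φ (Q : Set (En n)) Set.univ ∧
    p.Prime ∧ q.Prime ∧ p < q ∧ p * k < q ∧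
    φ '' C = (fun z => ab + z) '' Epq p q

/-- The unit circle in `ℝ²`. -/
def unitCircle2 : Set (ℝ × ℝ) := {w | w.1 ^ 2 + w.2 ^ 2 = 1}

/-- The unit 2-sphere in `ℝ³`. -/
def unitSphere2 : Set (En 3) := {u | ‖u‖ = 1}

/-- `F_{p,q}` as a polynomial in two variables. -/
def FpqPoly (p q : ℕ) : MvPolynomial (Fin 2) ℝ :=
  MvPolynomial.X 0 ^ p - MvPolynomial.X 1 ^ q +
    MvPolynomial.X 0 ^ (2 * q) + MvPolynomial.X 1 ^ (2 * q)

/-- The curve `C_{p,q}` as a subset of the Euclidean plane `ℝ²`. -/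
def CpqE (p q : ℕ) : Set (En 2) := {x | pEval (FpqPoly p q) x = 0}


/-- `F_{p,q}` over an arbitrary field `𝕂`. -/
def FpqK (𝕂 : Type*) [Field 𝕂] (p q : ℕ) (w : 𝕂 × 𝕂) : 𝕂 :=
  w.1 ^ p - w.2 ^ q + w.1 ^ (2 * q) + w.2 ^ (2 * q)


section AuxLemmas
open MvPolynomial



-- eval at zero of a monomial
lemma eval0_monomial (s : Fin 2 →₀ ℕ) (a : ℝ) :
    eval (0 : Fin 2 → ℝ) (monomial s a) = if s = 0 then a else 0 := by
  rw [eval_monomial]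
  by_cases hs : s = 0
  · simp [hs]
  · rw [if_neg hs]
    obtain ⟨j, hj⟩ := Finsupp.ne_iff.mp hs
    simp only [Finsupp.coe_zero, Pi.zero_apply] at hj
    have hjs : j ∈ s.support := Finsupp.mem_support_iff.mpr hj
    rw [Finsupp.prod]
    rw [Finset.prod_eq_zero hjs (by simp [zero_pow hj])]
    ring

lemma evalZero_pderiv (P : MvPolynomial (Fin 2) ℝ) (i : Fin 2) :
    eval (0 : Fin 2 → ℝ) (pderiv i P) = coeff (Finsupp.single i 1) P := by
  conv_lhs => rw [← support_sum_monomial_coeff P, map_sum, map_sum]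
  rw [Finset.sum_congr rfl
    (g := fun m => if m = Finsupp.single i 1 then coeff m P else 0) ?_]
  · rw [Finset.sum_ite_eq' P.support (Finsupp.single i 1) (fun m => coeff m P)]
    split
    · rfl
    · next h => exact (MvPolynomial.notMem_support_iff.mp h).symm
  · intro m _
    rw [pderiv_monomial, eval0_monomial]
    by_cases hm : m = Finsupp.single i 1
    · subst hm; simp
    · simp only [if_neg hm]
      by_cases hsub : m - Finsupp.single i 1 = 0
      · rw [if_pos hsub]
        have hle : m ≤ Finsupp.single i 1 := tsub_eq_zero_iff_le.mp hsub
        rcases Nat.eq_zero_or_pos (m i) with h0 | h0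
        · simp [h0]
        · exfalso; apply hm
          ext j
          rcases eq_or_ne j i with rfl | hj
          · have := hle j
            simp only [Finsupp.single_eq_same] at this ⊢
            omega
          · have := hle j
            simp only [Finsupp.single_eq_of_ne' (Ne.symm hj)] at this ⊢
            omega
      · rw [if_neg hsub]


lemma abs_le_one_of_Icc {x : ℝ} (hx : x ∈ Set.Icc (0:ℝ) 1) : |x| ≤ 1 :=
  abs_le.mpr ⟨by linarith [hx.1], hx.2⟩

lemma abs_pow_sub_pow (x x' : ℝ) (hx : x ∈ Set.Icc (0:ℝ) 1) (hx' : x' ∈ Set.Icc (0:ℝ) 1) :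
    ∀ n : ℕ, |x ^ n - x' ^ n| ≤ n * |x - x'| := by
  intro n
  induction n with
  | zero => simp
  | succ n ih =>
    have key : x ^ (n+1) - x' ^ (n+1) = x ^ n * (x - x') + x' * (x ^ n - x' ^ n) := by ring
    rw [key]
    calc |x ^ n * (x - x') + x' * (x ^ n - x' ^ n)|
        ≤ |x ^ n * (x - x')| + |x' * (x ^ n - x' ^ n)| := abs_add_le _ _
      _ = |x ^ n| * |x - x'| + |x'| * |x ^ n - x' ^ n| := by rw [abs_mul, abs_mul]
      _ ≤ 1 * |x - x'| + 1 * (n * |x - x'|) := by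
          gcongr
          · rw [abs_pow]; exact pow_le_one₀ (abs_nonneg x) (abs_le_one_of_Icc hx)
          · exact abs_le_one_of_Icc hx'
      _ = (n+1 : ℕ) * |x - x'| := by push_cast; ring

lemma lip (P : MvPolynomial (Fin 2) ℝ) : ∃ C : ℝ, 0 ≤ C ∧
    ∀ x x' y : ℝ, x ∈ Set.Icc (0:ℝ) 1 → x' ∈ Set.Icc (0:ℝ) 1 → y ∈ Set.Icc (0:ℝ) 1 →
      |eval ![x, y] P - eval ![x', y] P| ≤ C * |x - x'| := by
  refine ⟨∑ d ∈ P.support, |coeff d P| * d 0, Finset.sum_nonneg fun d _ => by positivity, ?_⟩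
  intro x x' y hx hx' hy
  rw [eval_eq', eval_eq', ← Finset.sum_sub_distrib]
  calc |∑ d ∈ P.support, (coeff d P * ∏ i, (![x,y]) i ^ d i
          - coeff d P * ∏ i, (![x',y]) i ^ d i)|
      ≤ ∑ d ∈ P.support, |coeff d P * ∏ i, (![x,y]) i ^ d i
          - coeff d P * ∏ i, (![x',y]) i ^ d i| := Finset.abs_sum_le_sum_abs _ _
    _ ≤ ∑ d ∈ P.support, (|coeff d P| * d 0) * |x - x'| := ?_
    _ = (∑ d ∈ P.support, |coeff d P| * d 0) * |x - x'| := by rw [Finset.sum_mul]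
  refine Finset.sum_le_sum fun d _ => ?_
  have hexp : (∏ i, (![x,y]) i ^ d i) = x ^ d 0 * y ^ d 1 := by
    rw [Fin.prod_univ_two]; simp
  have hexp' : (∏ i, (![x',y]) i ^ d i) = x' ^ d 0 * y ^ d 1 := by
    rw [Fin.prod_univ_two]; simp
  rw [hexp, hexp']
  have : coeff d P * (x ^ d 0 * y ^ d 1) - coeff d P * (x' ^ d 0 * y ^ d 1)
      = coeff d P * y ^ d 1 * (x ^ d 0 - x' ^ d 0) := by ring
  rw [this, abs_mul, abs_mul]
  calc |coeff d P| * |y ^ d 1| * |x ^ d 0 - x' ^ d 0|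
      ≤ |coeff d P| * 1 * (d 0 * |x - x'|) := by
        have h1 : |y ^ d 1| ≤ 1 := by
          rw [abs_pow]; exact pow_le_one₀ (abs_nonneg y) (abs_le_one_of_Icc hy)
        have h2 : |x ^ d 0 - x' ^ d 0| ≤ d 0 * |x - x'| := abs_pow_sub_pow x x' hx hx' (d 0)
        exact mul_le_mul (mul_le_mul_of_nonneg_left h1 (abs_nonneg _)) h2
          (abs_nonneg _) (by positivity)
    _ = (|coeff d P| * d 0) * |x - x'| := by ring
open Polynomial Filter in

lemma poly_small : ∀ (N : ℕ) (Q : Polynomial ℝ) (C : ℝ),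
    (∀ s : ℝ, s ∈ Set.Ioo (0:ℝ) (1/2) → |Q.eval s| ≤ C * s ^ N) →
    ∀ k < N, Q.coeff k = 0 := by
  intro N
  induction N with
  | zero => intro Q C h k hk; omega
  | succ N ih =>
    intro Q C h k hk
    -- first, Q.eval 0 = 0
    have hIoo : Set.Ioo (0:ℝ) (1/2) ∈ nhdsWithin (0:ℝ) (Set.Ioi 0) := by
      apply mem_nhdsWithin.mpr
      exact ⟨Set.Iio (1/2), isOpen_Iio, by norm_num, by
        intro t ht; exact ⟨ht.2, ht.1⟩⟩
    have hev : ∀ᶠ s in nhdsWithin (0:ℝ) (Set.Ioi 0), |Q.eval s| ≤ C * s ^ (N+1) :=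
      Filter.eventually_of_mem hIoo fun s hs => h s hs
    have ht1 : Tendsto (fun s : ℝ => |Q.eval s|) (nhdsWithin (0:ℝ) (Set.Ioi 0))
        (nhds |Q.eval 0|) :=
      ((Polynomial.continuous Q).abs.tendsto 0).mono_left nhdsWithin_le_nhds
    have ht2 : Tendsto (fun s : ℝ => C * s ^ (N+1)) (nhdsWithin (0:ℝ) (Set.Ioi 0))
        (nhds 0) := by
      have hc : Continuous (fun s : ℝ => C * s ^ (N+1)) := by continuity
      have := (hc.tendsto (0:ℝ)).mono_left (nhdsWithin_le_nhds (s := Set.Ioi (0:ℝ)))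
      simpa using this
    have h0 : |Q.eval 0| ≤ 0 := le_of_tendsto_of_tendsto ht1 ht2 hev
    have heval0 : Q.eval 0 = 0 := abs_nonpos_iff.mp h0
    have hc0 : Q.coeff 0 = 0 := by rwa [Polynomial.coeff_zero_eq_eval_zero]
    rcases Nat.eq_zero_or_pos k with rfl | hkpos
    · exact hc0
    -- Q = divX Q * X
    have hQ : Q = Q.divX * Polynomial.X := by
      conv_lhs => rw [← Polynomial.divX_mul_X_add Q]
      rw [hc0, map_zero, add_zero]
    have hbound : ∀ s : ℝ, s ∈ Set.Ioo (0:ℝ) (1/2) → |Q.divX.eval s| ≤ C * s ^ N := by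
      intro s hs
      have hs0 : (0:ℝ) < s := hs.1
      have := h s hs
      rw [hQ] at this
      simp only [Polynomial.eval_mul, Polynomial.eval_X, abs_mul, abs_of_pos hs0] at this
      have : |Q.divX.eval s| * s ≤ C * s ^ N * s := by
        calc |Q.divX.eval s| * s ≤ C * s ^ (N+1) := this
          _ = C * s ^ N * s := by ring
      exact le_of_mul_le_mul_right this hs0
    have := ih Q.divX C hbound (k - 1) (by omega)
    rw [show k = (k-1) + 1 by omega, ← Polynomial.coeff_divX]
    exact this


noncomputable def substPoly (p q : ℕ) (P : MvPolynomial (Fin 2) ℝ) : Polynomial ℝ :=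
  MvPolynomial.aeval ![Polynomial.X ^ q, Polynomial.X ^ p] P

lemma substPoly_eval (p q : ℕ) (P : MvPolynomial (Fin 2) ℝ) (s : ℝ) :
    (substPoly p q P).eval s = eval ![s ^ q, s ^ p] P := by
  have h1 : (Polynomial.aeval s).comp
        (MvPolynomial.aeval (R := ℝ) ![Polynomial.X ^ q, Polynomial.X ^ p])
      = MvPolynomial.aeval (fun i => Polynomial.aeval s ((![Polynomial.X ^ q, Polynomial.X ^ p] : Fin 2 → Polynomial ℝ) i)) :=
    MvPolynomial.comp_aeval (f := ![Polynomial.X ^ q, Polynomial.X ^ p]) (Polynomial.aeval s)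
  have h2 := congrFun (congrArg DFunLike.coe h1) P
  simp only [AlgHom.comp_apply] at h2
  rw [substPoly, ← Polynomial.coe_aeval_eq_eval, h2]
  rw [MvPolynomial.aeval_def, Algebra.algebraMap_self]
  rw [show eval₂ (RingHom.id ℝ) (fun i => Polynomial.aeval s ((![Polynomial.X ^ q, Polynomial.X ^ p] : Fin 2 → Polynomial ℝ) i)) P
      = eval (fun i => Polynomial.aeval s ((![Polynomial.X ^ q, Polynomial.X ^ p] : Fin 2 → Polynomial ℝ) i)) P from rfl]
  have : (fun i => Polynomial.aeval s ((![Polynomial.X ^ q, Polynomial.X ^ p] : Fin 2 → Polynomial ℝ) i))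
      = ![s ^ q, s ^ p] := by
    funext i
    fin_cases i <;> simp
  rw [this]

lemma substPoly_coeff (p q : ℕ) (P : MvPolynomial (Fin 2) ℝ) (k : ℕ) :
    (substPoly p q P).coeff k
      = ∑ m ∈ P.support, (if q * m 0 + p * m 1 = k then coeff m P else 0) := by
  rw [substPoly]
  conv_lhs => rw [← support_sum_monomial_coeff P, map_sum, Polynomial.finset_sum_coeff]
  refine Finset.sum_congr rfl fun m _ => ?_
  rw [aeval_monomial, Finsupp.prod_pow, Fin.prod_univ_two]
  simp only [Matrix.cons_val_zero, Matrix.cons_val_one, Matrix.head_cons]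
  rw [← pow_mul, ← pow_mul, ← pow_add]
  rw [show (algebraMap ℝ (Polynomial ℝ)) (coeff m P) = Polynomial.C (coeff m P) from rfl]
  rw [Polynomial.coeff_C_mul, Polynomial.coeff_X_pow]
  by_cases h : q * m 0 + p * m 1 = k
  · rw [if_pos h, if_pos h.symm, mul_one]
  · rw [if_neg h, if_neg (fun hh => h hh.symm), mul_zero]


lemma exp_eq_q {p q : ℕ} (hp : p.Prime) (hq : q.Prime) (hpq : p < q) (m : Fin 2 →₀ ℕ) :
    q * m 0 + p * m 1 = q ↔ m = Finsupp.single 0 1 := by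
  constructor
  · intro h
    have hq0 : 0 < q := hq.pos
    have hp0 : 0 < p := hp.pos
    have hm0 : m 0 = 1 := by
      rcases Nat.lt_or_ge (m 0) 1 with h0 | h0
      · exfalso
        have : m 0 = 0 := by omega
        rw [this, mul_zero, zero_add] at h
        have hdvd : p ∣ q := ⟨m 1, h.symm⟩
        exact absurd ((Nat.prime_dvd_prime_iff_eq hp hq).mp hdvd) (by omega)
      · rcases Nat.lt_or_ge (m 0) 2 with h1 | h1
        · omega
        · exfalso; nlinarith [Nat.mul_le_mul_left q h1]
    have hm1 : m 1 = 0 := by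
      rw [hm0, mul_one] at h
      have : p * m 1 = 0 := by omega
      exact (Nat.mul_eq_zero.mp this).resolve_left (by omega)
    ext j
    match j with
    | 0 => simp [hm0]
    | 1 => simp [hm1, Finsupp.single_eq_of_ne (show (0 : Fin 2) ≠ 1 by decide)]
  · rintro rfl
    simp [Finsupp.single_eq_of_ne (show (0 : Fin 2) ≠ 1 by decide)]

lemma exp_eq_p {p q : ℕ} (hp : p.Prime) (hq : q.Prime) (hpq : p < q) (m : Fin 2 →₀ ℕ) :
    q * m 0 + p * m 1 = p ↔ m = Finsupp.single 1 1 := by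
  constructor
  · intro h
    have hp0 : 0 < p := hp.pos
    have hm0 : m 0 = 0 := by
      by_contra h0
      have : 1 ≤ m 0 := Nat.one_le_iff_ne_zero.mpr h0
      nlinarith [Nat.mul_le_mul_left q this]
    have hm1 : m 1 = 1 := by
      rw [hm0, mul_zero, zero_add] at h
      exact Nat.eq_of_mul_eq_mul_left hp0 (by omega)
    ext j
    match j with
    | 0 => simp [hm0, Finsupp.single_eq_of_ne (show (1 : Fin 2) ≠ 0 by decide)]
    | 1 => simp [hm1]
  · rintro rfl
    simp [Finsupp.single_eq_of_ne (show (1 : Fin 2) ≠ 0 by decide)]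

lemma sum_support_ite (P : MvPolynomial (Fin 2) ℝ) (m0 : Fin 2 →₀ ℕ)
    (cond : (Fin 2 →₀ ℕ) → Prop) [DecidablePred cond] (hiff : ∀ m, cond m ↔ m = m0) :
    (∑ m ∈ P.support, if cond m then coeff m P else 0) = coeff m0 P := by
  rw [Finset.sum_congr rfl (fun m _ => if_congr (hiff m) rfl rfl)]
  rw [Finset.sum_ite_eq' P.support m0 (fun m => coeff m P)]
  split
  · rfl
  · next h => exact (MvPolynomial.notMem_support_iff.mp h).symm

lemma vanish {p q : ℕ} (hp : p.Prime) (hq : q.Prime) (hpq : p < q)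
    (P : MvPolynomial (Fin 2) ℝ)
    (hvan : ∀ x : Fin 2 → ℝ,
      (x 0)^p - (x 1)^q + (x 0)^(2*q) + (x 1)^(2*q) = 0 → eval x P = 0) :
    coeff (Finsupp.single 0 1) P = 0 ∧ coeff (Finsupp.single 1 1) P = 0 := by
  have hp2 : 2 ≤ p := hp.two_le
  have hq2 : 2 ≤ q := hq.two_le
  obtain ⟨C, hC0, hlip⟩ := lip P
  have key : ∀ s ∈ Set.Ioo (0:ℝ) (1/2), |(substPoly p q P).eval s| ≤ (2*C) * s^(q+1) := by
    intro s hs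
    have hs0 : (0:ℝ) < s := hs.1
    have hsle1 : s ≤ 1 := by linarith [hs.2]
    have hspow_le_one : ∀ n : ℕ, s ^ n ≤ 1 := fun n => pow_le_one₀ hs0.le hsle1
    have hcont : ContinuousOn (fun x : ℝ => x^p + x^(2*q)) (Set.Icc 0 (s^q)) :=
      ((continuous_pow p).add (continuous_pow (2*q))).continuousOn
    have h0q : (0:ℝ) ≤ s^q := by positivity
    set c : ℝ := (s^p)^q - (s^p)^(2*q) with hc
    have hsp1 : s ^ p ≤ 1 := hspow_le_one p
    have hcnonneg : 0 ≤ c := by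
      have h1 : (s^p)^(2*q) ≤ (s^p)^q := pow_le_pow_of_le_one (by positivity) hsp1 (by omega)
      simp only [hc]; linarith
    have hcomm : (s^q)^p = (s^p)^q := by rw [← pow_mul, ← pow_mul, mul_comm]
    have hcle : c ≤ (s^q)^p + (s^q)^(2*q) := by
      have h2 : (0:ℝ) ≤ (s^q)^(2*q) := by positivity
      have h3 : (0:ℝ) ≤ (s^p)^(2*q) := by positivity
      simp only [hc]; rw [hcomm]; linarith
    have hmem : c ∈ Set.Icc ((fun x : ℝ => x^p + x^(2*q)) 0) ((fun x : ℝ => x^p + x^(2*q)) (s^q)) := by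
      constructor
      · simp only []
        rw [zero_pow (by omega), zero_pow (by omega), add_zero]
        exact hcnonneg
      · simpa using hcle
    obtain ⟨x, hxmem, hxeq⟩ := intermediate_value_Icc h0q hcont hmem
    simp only [] at hxeq
    have hx0 : 0 ≤ x := hxmem.1
    have hxle : x ≤ s^q := hxmem.2
    have hcurve : eval ![x, s^p] P = 0 := by
      apply hvan
      simp only [Matrix.cons_val_zero, Matrix.cons_val_one, Matrix.head_cons]
      simp only [hc] at hxeq
      linarith
    have hkey : (s^q - x) * (s^q)^(p-1) ≤ (s^q)^p - x^p := by
      have e1 : (s^q)^p = (s^q)^(p-1) * (s^q) := by rw [← pow_succ]; congr 1; omega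
      have e2 : x^p = x^(p-1) * x := by rw [← pow_succ]; congr 1; omega
      have h3 : x * x^(p-1) ≤ x * (s^q)^(p-1) :=
        mul_le_mul_of_nonneg_left (pow_le_pow_left₀ hx0 hxle _) hx0
      nlinarith
    have hdiff : (s^q)^p - x^p = (s^p)^(2*q) + x^(2*q) := by
      simp only [hc] at hxeq
      rw [hcomm]; linarith
    have hbound1 : (s^p)^(2*q) + x^(2*q) ≤ 2 * s^(2*(p*q)) := by
      have hA : (s^p)^(2*q) = s^(2*(p*q)) := by rw [← pow_mul]; congr 1; ring
      have hA' : s^(2*(p*q)) ≤ s^(2*(p*q)) := le_refl _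
      have hB : x^(2*q) ≤ (s^q)^(2*q) := pow_le_pow_left₀ hx0 hxle _
      have hC' : (s^q)^(2*q) ≤ s^(2*(p*q)) := by
        rw [← pow_mul]
        apply pow_le_pow_of_le_one hs0.le hsle1
        have : p ≤ q := le_of_lt hpq
        calc 2*(p*q) ≤ 2*(q*q) := by nlinarith
          _ = q*(2*q) := by ring
      calc (s^p)^(2*q) + x^(2*q) ≤ s^(2*(p*q)) + s^(2*(p*q)) := by
            rw [hA]; exact add_le_add hA' (hB.trans hC')
        _ = 2 * s^(2*(p*q)) := by ring
    have hxs : s^q - x ≤ 2 * s^(p*q + q) := by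
      have hpos : (0:ℝ) < (s^q)^(p-1) := by positivity
      have e3 : (2:ℝ) * s^(2*(p*q)) = 2 * s^(p*q+q) * (s^q)^(p-1) := by
        rw [mul_assoc, ← pow_mul, ← pow_add]
        obtain ⟨r, hr⟩ : ∃ r, p = r + 1 := ⟨p-1, by omega⟩
        subst hr
        congr 1
        simp only [Nat.add_sub_cancel]
        ring
      have h2 : (s^q - x) * (s^q)^(p-1) ≤ 2 * s^(p*q+q) * (s^q)^(p-1) := by
        calc (s^q - x) * (s^q)^(p-1) ≤ (s^q)^p - x^p := hkey
          _ = (s^p)^(2*q) + x^(2*q) := hdiff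
          _ ≤ 2 * s^(2*(p*q)) := hbound1
          _ = 2 * s^(p*q+q) * (s^q)^(p-1) := e3
      exact le_of_mul_le_mul_right h2 hpos
    have hmq : s^q ∈ Set.Icc (0:ℝ) 1 := ⟨by positivity, hspow_le_one q⟩
    have hmx : x ∈ Set.Icc (0:ℝ) 1 := ⟨hx0, hxle.trans (hspow_le_one q)⟩
    have hmp : s^p ∈ Set.Icc (0:ℝ) 1 := ⟨by positivity, hsp1⟩
    have hl := hlip (s^q) x (s^p) hmq hmx hmp
    rw [substPoly_eval]
    calc |eval ![s^q, s^p] P| = |eval ![s^q,s^p] P - eval ![x,s^p] P| := by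
          rw [hcurve, sub_zero]
      _ ≤ C * |s^q - x| := hl
      _ ≤ C * (2 * s^(q+1)) := by
          have habs : |s^q - x| = s^q - x := abs_of_nonneg (by linarith)
          have hfinal : s^(p*q+q) ≤ s^(q+1) := by
            apply pow_le_pow_of_le_one hs0.le hsle1
            nlinarith
          rw [habs]
          have : s^q - x ≤ 2 * s^(q+1) := hxs.trans (by linarith)
          exact mul_le_mul_of_nonneg_left this hC0
      _ = 2*C*s^(q+1) := by ring
  have hcoeffs := poly_small (q+1) (substPoly p q P) (2*C) key
  constructor
  · have h1 := hcoeffs q (by omega)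
    rw [substPoly_coeff] at h1
    rwa [sum_support_ite P (Finsupp.single 0 1) _ (exp_eq_q hp hq hpq)] at h1
  · have h1 := hcoeffs p (by omega)
    rw [substPoly_coeff] at h1
    rwa [sum_support_ite P (Finsupp.single 1 1) _ (exp_eq_p hp hq hpq)] at h1

lemma pEval_FpqPoly (p q : ℕ) (x : En 2) :
    pEval (FpqPoly p q) x = (x 0)^p - (x 1)^q + (x 0)^(2*q) + (x 1)^(2*q) := by
  simp [pEval, FpqPoly]

lemma grad0 (p q : ℕ) (x : En 2) :
    pEval (pderiv 0 (FpqPoly p q)) x = p * (x 0)^(p-1) + 2*q*(x 0)^(2*q-1) := by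
  simp [pEval, FpqPoly, pderiv_pow, pderiv_X_self,
    pderiv_X_of_ne (show (1:Fin 2) ≠ 0 by decide)]

lemma grad1 (p q : ℕ) (x : En 2) :
    pEval (pderiv 1 (FpqPoly p q)) x = -((q:ℝ) * (x 1)^(q-1)) + 2*q*(x 1)^(2*q-1) := by
  simp [pEval, FpqPoly, pderiv_pow, pderiv_X_self,
    pderiv_X_of_ne (show (0:Fin 2) ≠ 1 by decide)]

lemma origin_of_grads {p q : ℕ} (hp : p.Prime) (hq : q.Prime) (hpq : p < q)
    {a b : ℝ} (hF : a^p - b^q + a^(2*q) + b^(2*q) = 0)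
    (h0 : (p:ℝ) * a^(p-1) + 2*q*a^(2*q-1) = 0)
    (h1 : -((q:ℝ) * b^(q-1)) + 2*q*b^(2*q-1) = 0) : a = 0 ∧ b = 0 := by
  have hp2 : 2 ≤ p := hp.two_le
  have hq2 : 2 ≤ q := hq.two_le
  have hqR : (0:ℝ) < q := by exact_mod_cast hq.pos
  have hpR : (0:ℝ) < p := by exact_mod_cast hp.pos
  have hpqR : (p:ℝ) < q := by exact_mod_cast hpq
  have hbcase : b = 0 ∨ b^q = 1/2 := by
    have e : b^(2*q-1) = b^(q-1) * b^q := by rw [← pow_add]; congr 1; omega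
    rw [e] at h1
    have factored : ((q:ℝ) * b^(q-1)) * (2*b^q - 1) = 0 := by linear_combination h1
    rcases mul_eq_zero.mp factored with h | h
    · left
      have hb1 : b^(q-1) = 0 := by
        rcases mul_eq_zero.mp h with h' | h'
        · exact absurd h' (by positivity)
        · exact h'
      exact pow_eq_zero_iff (by omega) |>.mp hb1
    · right; linarith
  have hbpart : -b^q + b^(2*q) = 0 ∨ -b^q + b^(2*q) = -(1/4) := by
    rcases hbcase with rfl | hb
    · left; rw [zero_pow (by omega), zero_pow (by omega)]; ring
    · right
      have hh : b^(2*q) = (b^q)^2 := by rw [← pow_mul]; congr 1; ring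
      rw [hh, hb]; norm_num
  have ha : a = 0 := by
    by_contra ha
    have e : a^(2*q-1) = a^(p-1) * a^(2*q-p) := by rw [← pow_add]; congr 1; omega
    rw [e] at h0
    have hap1 : a^(p-1) ≠ 0 := pow_ne_zero _ ha
    have hfac : (p:ℝ) + 2*q*a^(2*q-p) = 0 := by
      have hh : a^(p-1) * ((p:ℝ) + 2*q*a^(2*q-p)) = 0 := by linear_combination h0
      exact (mul_eq_zero.mp hh).resolve_left hap1
    have haneg : a^(2*q-p) < 0 := by nlinarith
    have hpodd : Odd p := by
      rcases hp.eq_two_or_odd' with rfl | h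
      · exfalso
        have hsq : a^(2*q-2) = (a^(q-1))^2 := by rw [← pow_mul]; congr 1; omega
        rw [hsq] at haneg
        exact absurd haneg (not_lt.mpr (sq_nonneg _))
      · exact h
    have hodd2 : Odd (2*q - p) := by
      rcases hpodd with ⟨k, hk⟩; exact ⟨q - k - 1, by omega⟩
    have haneg' : a < 0 := by
      by_contra h; push_neg at h
      exact absurd (pow_nonneg h (2*q-p)) (not_le.mpr haneg)
    have hap : a^p < 0 := hpodd.pow_neg haneg'
    have e2 : a^(2*q) = a^p * a^(2*q-p) := by rw [← pow_add]; congr 1; omega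
    have hcomb : 2*(q:ℝ)*(a^p + a^(2*q)) = a^p * (2*q - p) := by
      rw [e2]; linear_combination (a^p) * hfac
    have hppos : (0:ℝ) < 2*q - p := by linarith
    have hsum_neg : a^p + a^(2*q) < 0 := by nlinarith
    rcases hbpart with hb0 | hb14 <;> nlinarith
  refine ⟨ha, ?_⟩
  subst ha
  rw [zero_pow (by omega : p ≠ 0), zero_pow (by omega : 2*q ≠ 0)] at hF
  rcases hbcase with rfl | hb
  · rfl
  · exfalso
    have hh : b^(2*q) = (b^q)^2 := by rw [← pow_mul]; congr 1; ring
    rw [hh, hb] at hF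
    norm_num at hF
end AuxLemmas


/-- Lemma 2.2 (`lem-2-2`), part (ii): the origin is the unique singular point of `C_{p,q}`. -/
theorem lem_2_2_ii {p q : ℕ} (hp : p.Prime) (hq : q.Prime) (hpq : p < q) :
    (0 : En 2) ∈ CpqE p q ∧
    (∀ i : Fin 2, pEval (MvPolynomial.pderiv i (FpqPoly p q)) (0 : En 2) = 0) ∧
    (∀ x ∈ CpqE p q, x ≠ 0 →
      ∃ i : Fin 2, pEval (MvPolynomial.pderiv i (FpqPoly p q)) x ≠ 0) ∧
    (∀ x ∈ CpqE p q, x ≠ 0 → NonsingularAt (CpqE p q) 1 x) ∧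
    ¬ NonsingularAt (CpqE p q) 1 (0 : En 2) := by
  have hp2 : 2 ≤ p := hp.two_le
  have hq2 : 2 ≤ q := hq.two_le
  have hz0 : ((0 : En 2)) 0 = 0 := rfl
  have hz1 : ((0 : En 2)) 1 = 0 := rfl
  have part1 : (0 : En 2) ∈ CpqE p q := by
    show pEval (FpqPoly p q) 0 = 0
    rw [pEval_FpqPoly, hz0, hz1]
    rw [zero_pow (by omega : p ≠ 0), zero_pow (by omega : q ≠ 0),
      zero_pow (by omega : 2*q ≠ 0)]
    ring
  have part2 : ∀ i : Fin 2, pEval (MvPolynomial.pderiv i (FpqPoly p q)) (0 : En 2) = 0 := by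
    intro i
    match i with
    | 0 =>
      rw [grad0, hz0, zero_pow (by omega : p - 1 ≠ 0), zero_pow (by omega : 2*q - 1 ≠ 0)]
      ring
    | 1 =>
      rw [grad1, hz1, zero_pow (by omega : q - 1 ≠ 0), zero_pow (by omega : 2*q - 1 ≠ 0)]
      ring
  have part3 : ∀ x ∈ CpqE p q, x ≠ 0 →
      ∃ i : Fin 2, pEval (MvPolynomial.pderiv i (FpqPoly p q)) x ≠ 0 := by
    intro x hx hxne
    by_contra hcon
    push_neg at hcon
    have h0 := hcon 0
    have h1 := hcon 1
    rw [grad0] at h0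
    rw [grad1] at h1
    have hF : (x 0)^p - (x 1)^q + (x 0)^(2*q) + (x 1)^(2*q) = 0 := by
      rw [← pEval_FpqPoly]; exact hx
    obtain ⟨ha, hb⟩ := origin_of_grads hp hq hpq hF h0 h1
    apply hxne
    ext i
    fin_cases i
    · exact ha
    · exact hb
  haveI hU : Unique (Fin (2 - 1)) :=
    ⟨⟨⟨0, by omega⟩⟩, fun a => Fin.ext (by omega)⟩
  have part4 : ∀ x ∈ CpqE p q, x ≠ 0 → NonsingularAt (CpqE p q) 1 x := by
    intro x hx hxne
    obtain ⟨i, hi⟩ := part3 x hx hxne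
    refine ⟨Set.univ, fun _ => FpqPoly p q, isOpen_univ, Set.mem_univ x,
      fun _ y hy => hy, ?_, ?_⟩
    · ext y
      simp only [Set.mem_inter_iff, Set.mem_univ, and_true, Set.mem_setOf_eq, true_and]
      constructor
      · intro h _
        exact h
      · intro h
        exact h default
    · apply linearIndependent_unique_iff.mpr
      intro hcontra
      apply hi
      have := congrFun hcontra i
      simpa using this
  have part5 : ¬ NonsingularAt (CpqE p q) 1 (0 : En 2) := by
    rintro ⟨Ω, P, hΩ, hmem, hvan, hcut, hlin⟩
    set i0 : Fin (2-1) := default with hi0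
    have hvan' : ∀ y : Fin 2 → ℝ,
        (y 0)^p - (y 1)^q + (y 0)^(2*q) + (y 1)^(2*q) = 0 →
        MvPolynomial.eval y (P i0) = 0 := by
      intro y hy
      have hyC : (WithLp.toLp 2 y) ∈ CpqE p q := by
        show pEval (FpqPoly p q) (WithLp.toLp 2 y) = 0
        rw [pEval_FpqPoly]
        exact hy
      exact hvan i0 _ hyC
    obtain ⟨hc0, hc1⟩ := vanish hp hq hpq (P i0) hvan'
    have hzero : (fun j => pEval (MvPolynomial.pderiv j (P i0)) (0 : En 2))
        = (0 : Fin 2 → ℝ) := by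
      funext j
      have hre : pEval (MvPolynomial.pderiv j (P i0)) (0 : En 2)
          = MvPolynomial.eval (0 : Fin 2 → ℝ) (MvPolynomial.pderiv j (P i0)) := rfl
      rw [Pi.zero_apply, hre, evalZero_pderiv]
      fin_cases j
      · exact hc0
      · exact hc1
    exact hlin.ne_zero i0 hzero
  exact ⟨part1, part2, part3, part4, part5⟩

end
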